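/- If X is an equiangular tight frame of m > n unit vectors for R^n, then X is a Grassmannian frame and its core equals X itself; equivalently, X has no isolable vectors. -/

import Mathlib

open scoped RealInnerProductSpace
abbrev E (n : ℕ) := EuclideanSpace ℝ (Fin n)
noncomputable def coh {n : ℕ} (X : Set (E n)) : ℝ :=
  sSup {r : ℝ | ∃ x ∈ X, ∃ y ∈ X, x ≠ y ∧ r = |⟪x, y⟫|}
def IsUnitSet {n : ℕ} (X : Set (E n)) : Prop := ∀ x ∈ X, ‖x‖ = 1
def Isolated {n : ℕ} (X : Set (E n)) (x : E n) : Prop :=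
  ∀ y ∈ X, y ≠ x → |⟪x, y⟫| < coh X
def Isolable {n : ℕ} (X : Set (E n)) (x : E n) : Prop :=
  ∀ ε > 0, ∃ x' : E n, ‖x'‖ = 1 ∧ ‖x - x'‖ < ε ∧ ∀ y ∈ X, y ≠ x → |⟪x', y⟫| < coh X
def Grassmannian {n : ℕ} (m : ℕ) (X : Set (E n)) : Prop :=
  IsUnitSet X ∧ X.Finite ∧ X.ncard = m ∧
    ∀ Y : Set (E n), IsUnitSet Y → Y.Finite → Y.ncard = m → coh X ≤ coh Y
noncomputable def coreSeq {n : ℕ} (X : Set (E n)) : ℕ → Set (E n)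
  | 0 => X
  | k + 1 => coreSeq X k \ {x ∈ coreSeq X k | Isolable (coreSeq X k) x}
noncomputable def core {n : ℕ} (X : Set (E n)) : Set (E n) := ⋂ k, coreSeq X (k + 1)

lemma welch {n : ℕ} {ι : Type*} (s : Finset ι) (f : ι → E n) :
    (∑ i ∈ s, ‖f i‖^2)^2 ≤ n * ∑ i ∈ s, ∑ j ∈ s, ⟪f i, f j⟫^2 := by
  have hin : ∀ x y : E n, ⟪x, y⟫ = ∑ a, x a * y a := by
    intro x y; simp [PiLp.inner_apply, RCLike.inner_apply]; exact Finset.sum_congr rfl fun _ _ => mul_comm _ _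
  set G : Fin n → Fin n → ℝ := fun a b => ∑ i ∈ s, f i a * f i b with hG
  have h1 : ∑ i ∈ s, ‖f i‖^2 = ∑ a, G a a := by
    have hnorm : ∀ i, ‖f i‖^2 = ∑ a, f i a * f i a := fun i => by
      rw [← real_inner_self_eq_norm_sq, hin]
    simp_rw [hnorm, hG]
    exact Finset.sum_comm
  have h2 : ∑ i ∈ s, ∑ j ∈ s, ⟪f i, f j⟫^2 = ∑ a, ∑ b, (G a b)^2 := by
    have expand : ∀ i j : ι, ⟪f i, f j⟫^2
        = ∑ a, ∑ b, (f i a * f j a) * (f i b * f j b) := by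
      intro i j
      rw [hin, sq, Finset.sum_mul_sum]
    simp_rw [expand]
    calc ∑ i ∈ s, ∑ j ∈ s, ∑ a, ∑ b, (f i a * f j a) * (f i b * f j b)
        = ∑ i ∈ s, ∑ a, ∑ j ∈ s, ∑ b, (f i a * f j a) * (f i b * f j b) :=
          Finset.sum_congr rfl fun i _ => Finset.sum_comm
      _ = ∑ i ∈ s, ∑ a, ∑ b, ∑ j ∈ s, (f i a * f j a) * (f i b * f j b) :=
          Finset.sum_congr rfl fun i _ => Finset.sum_congr rfl fun a _ => Finset.sum_comm
      _ = ∑ a, ∑ i ∈ s, ∑ b, ∑ j ∈ s, (f i a * f j a) * (f i b * f j b) := Finset.sum_comm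
      _ = ∑ a, ∑ b, ∑ i ∈ s, ∑ j ∈ s, (f i a * f j a) * (f i b * f j b) :=
          Finset.sum_congr rfl fun a _ => Finset.sum_comm
      _ = ∑ a, ∑ b, (G a b)^2 := by
          refine Finset.sum_congr rfl fun a _ => Finset.sum_congr rfl fun b _ => ?_
          rw [hG, sq, Finset.sum_mul_sum]
          exact Finset.sum_congr rfl fun i _ => Finset.sum_congr rfl fun j _ => by ring
  rw [h1, h2]
  have key := sq_sum_le_card_mul_sum_sq (s := (Finset.univ : Finset (Fin n)))
    (f := fun a => G a a)
  simp only [Finset.card_univ, Fintype.card_fin] at key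
  calc (∑ a, G a a)^2 ≤ (n : ℝ) * ∑ a, (G a a)^2 := by exact_mod_cast key
    _ ≤ n * ∑ a, ∑ b, (G a b)^2 := by
        refine mul_le_mul_of_nonneg_left (Finset.sum_le_sum fun a _ => ?_) (by positivity)
        exact Finset.single_le_sum (f := fun b => (G a b)^2) (fun b _ => sq_nonneg _)
          (Finset.mem_univ a)

lemma split_sum {n : ℕ} {ι : Type*} [DecidableEq ι] (s : Finset ι) (f : ι → E n) :
    ∑ i ∈ s, ∑ j ∈ s, ⟪f i, f j⟫^2
      = ∑ i ∈ s, ⟪f i, f i⟫^2 + ∑ i ∈ s, ∑ j ∈ s.erase i, ⟪f i, f j⟫^2 := by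
  rw [← Finset.sum_add_distrib]
  exact Finset.sum_congr rfl fun i hi =>
    (Finset.add_sum_erase s (fun j => ⟪f i, f j⟫^2) hi).symm

lemma welch_off {n m : ℕ} {ι : Type*} [DecidableEq ι] (s : Finset ι) (f : ι → E n)
    (hu : ∀ i ∈ s, ‖f i‖ = 1) (hcard : s.card = m) (hn : 0 < n) :
    (m:ℝ)^2 / n - m ≤ ∑ i ∈ s, ∑ j ∈ s.erase i, ⟪f i, f j⟫^2 := by
  have hN : (0:ℝ) < n := by exact_mod_cast hn
  have h1 : ∑ i ∈ s, ‖f i‖^2 = (m:ℝ) := by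
    rw [Finset.sum_congr rfl fun i hi => by rw [hu i hi]]
    simp [hcard]
  have h2 : ∑ i ∈ s, ⟪f i, f i⟫^2 = (m:ℝ) := by
    have he : ∀ i ∈ s, ⟪f i, f i⟫^2 = (1:ℝ) := fun i hi => by
      rw [real_inner_self_eq_norm_sq, hu i hi]; norm_num
    rw [Finset.sum_congr rfl he]; simp [hcard]
  have hw := welch s f
  rw [h1, split_sum, h2] at hw
  rw [div_sub' (ne_of_gt hN), div_le_iff₀ hN]
  nlinarith [hw]

lemma abs_inner_le_coh {n : ℕ} {Y : Set (E n)} (hY : Y.Finite) {a b : E n}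
    (ha : a ∈ Y) (hb : b ∈ Y) (hab : a ≠ b) : |⟪a, b⟫| ≤ coh Y := by
  apply le_csSup
  · apply Set.Finite.bddAbove
    apply Set.Finite.subset ((hY.prod hY).image fun p : E n × E n => |⟪p.1, p.2⟫|)
    rintro r ⟨x, hx, y, hy, -, rfl⟩
    exact ⟨(x, y), ⟨hx, hy⟩, rfl⟩
  · exact ⟨a, ha, b, hb, hab, rfl⟩

theorem etf_core_eq_self {n m : ℕ} (X : Set (E n))
    (hmn : n < m) (hn : 0 < n)
    (hfin : X.Finite) (hcard : X.ncard = m) (hunit : IsUnitSet X)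
    (htight : ∀ v : E n, ∑ x ∈ hfin.toFinset, ⟪x, v⟫ • x = ((m : ℝ) / n) • v)
    (hequi : ∃ c : ℝ, ∀ x ∈ X, ∀ y ∈ X, x ≠ y → |⟪x, y⟫| = c) :
    Grassmannian m X ∧ core X = X ∧ ∀ x ∈ X, ¬ Isolable X x := by
  classical
  obtain ⟨c, hc⟩ := hequi
  set s := hfin.toFinset with hsdef
  have hsX : ∀ {x : E n}, x ∈ s ↔ x ∈ X := fun {x} => hfin.mem_toFinset
  have hscard : s.card = m := by
    rw [Set.ncard_eq_toFinset_card X hfin] at hcard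
    exact hcard
  have hm2 : 2 ≤ m := by omega
  have hN : (0:ℝ) < n := by exact_mod_cast hn
  have hM2 : (2:ℝ) ≤ m := by exact_mod_cast hm2
  have hNM : (n:ℝ) < m := by exact_mod_cast hmn
  -- two distinct elements
  have hex : ∃ a ∈ X, ∃ b ∈ X, a ≠ b := by
    obtain ⟨a, ha, b, hb, hab⟩ := Finset.one_lt_card.mp (by omega : 1 < s.card)
    exact ⟨a, hsX.mp ha, b, hsX.mp hb, hab⟩
  -- column sums from tightness
  have colsum : ∀ v : E n, ∑ x ∈ s, ⟪x, v⟫^2 = ((m:ℝ)/n) * ‖v‖^2 := by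
    intro v
    have h := congrArg (fun w : E n => ⟪w, v⟫) (htight v)
    simp only [sum_inner, real_inner_smul_left, ← sq, real_inner_self_eq_norm_sq] at h
    exact h
  have htot : ∑ x ∈ s, ∑ y ∈ s, ⟪x, y⟫^2 = (m:ℝ)^2 / n := by
    rw [Finset.sum_comm]
    have he : ∀ y ∈ s, ∑ x ∈ s, ⟪x, y⟫^2 = (m:ℝ)/n := by
      intro y hy
      rw [colsum y, hunit y (hsX.mp hy)]; norm_num
    rw [Finset.sum_congr rfl he, Finset.sum_const, hscard]
    push_cast; ring
  have hdiag : ∑ x ∈ s, ⟪x, x⟫^2 = (m:ℝ) := by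
    have he : ∀ x ∈ s, ⟪x, x⟫^2 = (1:ℝ) := fun x hx => by
      rw [real_inner_self_eq_norm_sq, hunit x (hsX.mp hx)]; norm_num
    rw [Finset.sum_congr rfl he, Finset.sum_const, hscard]; simp
  have hoff : ∑ x ∈ s, ∑ y ∈ s.erase x, ⟪x, y⟫^2 = (m:ℝ)^2 / n - m := by
    have := split_sum s (id : E n → E n)
    simp only [id] at this
    rw [this, hdiag] at htot
    linarith
  have hoffc : ∑ x ∈ s, ∑ y ∈ s.erase x, ⟪x, y⟫^2 = (m:ℝ) * ((m:ℝ) - 1) * c^2 := by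
    have he : ∀ x ∈ s, ∑ y ∈ s.erase x, ⟪x, y⟫^2 = ((m:ℝ) - 1) * c^2 := by
      intro x hx
      have he2 : ∀ y ∈ s.erase x, ⟪x, y⟫^2 = c^2 := by
        intro y hy
        rw [← sq_abs, hc x (hsX.mp hx) y (hsX.mp (Finset.mem_of_mem_erase hy))
          (Ne.symm (Finset.ne_of_mem_erase hy))]
      rw [Finset.sum_congr rfl he2, Finset.sum_const, Finset.card_erase_of_mem hx, hscard]
      have : ((m - 1 : ℕ) : ℝ) = (m:ℝ) - 1 := by
        push_cast [Nat.cast_sub (by omega : 1 ≤ m)]; ring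
      rw [nsmul_eq_mul, this]
    rw [Finset.sum_congr rfl he, Finset.sum_const, hscard, nsmul_eq_mul]; ring
  have hkey : (m:ℝ) * ((m:ℝ) - 1) * c^2 = (m:ℝ)^2 / n - m := by rw [← hoffc, hoff]
  have hrhs_pos : (0:ℝ) < (m:ℝ)^2 / n - m := by
    rw [sub_pos, lt_div_iff₀ hN]; nlinarith
  have hcpos : 0 < c := by
    have hcnn : 0 ≤ c := by
      obtain ⟨a, ha, b, hb, hab⟩ := hex
      rw [← hc a ha b hb hab]; exact abs_nonneg _
    rcases hcnn.lt_or_eq with h | h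
    · exact h
    · exfalso; rw [← h] at hkey; simp at hkey; linarith
  have hcoh : coh X = c := by
    have hset : {r : ℝ | ∃ x ∈ X, ∃ y ∈ X, x ≠ y ∧ r = |⟪x, y⟫|} = {c} := by
      ext r
      simp only [Set.mem_setOf_eq, Set.mem_singleton_iff]
      constructor
      · rintro ⟨a, ha, b, hb, hab, rfl⟩; exact hc a ha b hb hab
      · rintro rfl
        obtain ⟨a, ha, b, hb, hab⟩ := hex
        exact ⟨a, ha, b, hb, hab, (hc a ha b hb hab).symm⟩
    rw [coh, hset, csSup_singleton]
  -- no isolable vectors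
  have hni : ∀ x ∈ X, ¬ Isolable X x := by
    intro x hx hiso
    obtain ⟨x', hx'u, -, hx'c⟩ := hiso 1 one_pos
    set g : E n → E n := fun y => if y = x then x' else y with hg
    have hgu : ∀ y ∈ s, ‖g y‖ = 1 := by
      intro y hy
      by_cases h : y = x <;> simp [hg, h, hx'u, hunit y (hsX.mp hy)]
    have hlow := welch_off s g hgu hscard hn
    have hbnd : ∀ i ∈ s, ∀ j ∈ s.erase i, ⟪g i, g j⟫^2 ≤ c^2 ∧
        (i = x → ⟪g i, g j⟫^2 < c^2) := by
      intro i hi j hj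
      have hjs : j ∈ s := Finset.mem_of_mem_erase hj
      have hji : j ≠ i := Finset.ne_of_mem_erase hj
      by_cases hix : i = x
      · subst hix
        have : |⟪g i, g j⟫| < c := by
          rw [hg]; simp only [if_pos rfl, if_neg hji]
          rw [← hcoh]; exact hx'c j (hsX.mp hjs) hji
        have hlt : ⟪g i, g j⟫^2 < c^2 := by
          rw [← sq_abs]; exact pow_lt_pow_left₀ this (abs_nonneg _) two_ne_zero
        exact ⟨le_of_lt hlt, fun _ => hlt⟩
      · by_cases hjx : j = x
        · subst hjx
          have : |⟪g i, g j⟫| < c := by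
            rw [hg]; simp only [if_pos rfl, if_neg hix]
            rw [real_inner_comm, ← hcoh]
            exact hx'c i (hsX.mp hi) hix
          have hlt : ⟪g i, g j⟫^2 < c^2 := by
            rw [← sq_abs]; exact pow_lt_pow_left₀ this (abs_nonneg _) two_ne_zero
          exact ⟨le_of_lt hlt, fun h => absurd h hix⟩
        · have : ⟪g i, g j⟫^2 = c^2 := by
            rw [hg]; simp only [if_neg hix, if_neg hjx]
            rw [← sq_abs, hc i (hsX.mp hi) j (hsX.mp hjs) (Ne.symm hji)]
          exact ⟨le_of_eq this, fun h => absurd h hix⟩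
    have hxs : x ∈ s := hsX.mpr hx
    have hcard_erase : ∀ i : E n, i ∈ s → ((s.erase i).card : ℝ) = (m:ℝ) - 1 := by
      intro i hi
      rw [Finset.card_erase_of_mem hi, hscard]
      push_cast [Nat.cast_sub (by omega : 1 ≤ m)]; ring
    have hstrict : ∑ i ∈ s, ∑ j ∈ s.erase i, ⟪g i, g j⟫^2
        < (m:ℝ) * ((m:ℝ) - 1) * c^2 := by
      have hconst : ∑ i ∈ s, ((m:ℝ) - 1) * c^2 = (m:ℝ) * ((m:ℝ) - 1) * c^2 := by
        rw [Finset.sum_const, hscard, nsmul_eq_mul]; ring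
      rw [← hconst]
      apply Finset.sum_lt_sum
      · intro i hi
        calc ∑ j ∈ s.erase i, ⟪g i, g j⟫^2 ≤ ∑ j ∈ s.erase i, c^2 :=
              Finset.sum_le_sum fun j hj => (hbnd i hi j hj).1
          _ = ((m:ℝ) - 1) * c^2 := by
              rw [Finset.sum_const, nsmul_eq_mul, hcard_erase i hi]
      · refine ⟨x, hxs, ?_⟩
        have hne : (s.erase x).Nonempty := by
          rw [← Finset.card_pos, Finset.card_erase_of_mem hxs, hscard]; omega
        calc ∑ j ∈ s.erase x, ⟪g x, g j⟫^2 < ∑ j ∈ s.erase x, c^2 :=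
              Finset.sum_lt_sum_of_nonempty hne fun j hj => (hbnd x hxs j hj).2 rfl
          _ = ((m:ℝ) - 1) * c^2 := by
              rw [Finset.sum_const, nsmul_eq_mul, hcard_erase x hxs]
    rw [hkey] at hstrict
    linarith
  -- Grassmannian
  have hgrass : Grassmannian m X := by
    refine ⟨hunit, hfin, hcard, ?_⟩
    intro Y hYu hYfin hYcard
    by_contra hlt
    push_neg at hlt
    rw [hcoh] at hlt
    set t := hYfin.toFinset with htdef
    have htY : ∀ {x : E n}, x ∈ t ↔ x ∈ Y := fun {x} => hYfin.mem_toFinset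
    have htcard : t.card = m := by
      rw [Set.ncard_eq_toFinset_card Y hYfin] at hYcard
      exact hYcard
    have hlow := welch_off t (id : E n → E n) (fun i hi => hYu i (htY.mp hi)) htcard hn
    simp only [id] at hlow
    have hstrict : ∑ i ∈ t, ∑ j ∈ t.erase i, ⟪i, j⟫^2 < (m:ℝ) * ((m:ℝ) - 1) * c^2 := by
      have hconst : ∑ i ∈ t, ((m:ℝ) - 1) * c^2 = (m:ℝ) * ((m:ℝ) - 1) * c^2 := by
        rw [Finset.sum_const, htcard, nsmul_eq_mul]; ring
      rw [← hconst]
      have htne : t.Nonempty := by rw [← Finset.card_pos, htcard]; omega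
      apply Finset.sum_lt_sum_of_nonempty htne
      intro i hi
      have hne : (t.erase i).Nonempty := by
        rw [← Finset.card_pos, Finset.card_erase_of_mem hi, htcard]; omega
      have hlt : ∀ j ∈ t.erase i, ⟪i, j⟫^2 < c^2 := by
        intro j hj
        have : |⟪i, j⟫| < c :=
          lt_of_le_of_lt (abs_inner_le_coh hYfin (htY.mp hi)
            (htY.mp (Finset.mem_of_mem_erase hj)) (Ne.symm (Finset.ne_of_mem_erase hj))) hlt
        rw [← sq_abs]; exact pow_lt_pow_left₀ this (abs_nonneg _) two_ne_zero
      calc ∑ j ∈ t.erase i, ⟪i, j⟫^2 < ∑ j ∈ t.erase i, c^2 :=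
            Finset.sum_lt_sum_of_nonempty hne hlt
        _ = ((m:ℝ) - 1) * c^2 := by
            rw [Finset.sum_const, nsmul_eq_mul, Finset.card_erase_of_mem hi, htcard]
            push_cast [Nat.cast_sub (by omega : 1 ≤ m)]; ring
    rw [hkey] at hstrict
    linarith
  -- core
  have hseq : ∀ k, coreSeq X k = X := by
    intro k
    induction k with
    | zero => rfl
    | succ k ih =>
      show coreSeq X k \ {x ∈ coreSeq X k | Isolable (coreSeq X k) x} = X
      rw [ih]
      have : {x ∈ X | Isolable X x} = ∅ := by
        ext z
        simp only [Set.mem_setOf_eq, Set.mem_empty_iff_false, iff_false, not_and]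
        exact fun hz => hni z hz
      rw [this, Set.diff_empty]
  have hcore : core X = X := by
    rw [core]
    simp only [hseq]
    exact Set.iInter_const X
  exact ⟨hgrass, hcore, hni⟩
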